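/- Let V be a 2-dimensional real vector space and let u₀, u₁, u₂ ∈ V be pairwise linearly independent vectors. Then there exists a lattice (a ℤ-submodule spanned by a basis of V) containing u₀, u₁, u₂ if and only if there exist nonzero integers n₀, n₁, n₂ such that n₀·u₀ + n₁·u₁ + n₂·u₂ = 0. -/

import Mathlib

/-- Three pairwise linearly independent vectors in a 2-dimensional
real vector space lie in a common lattice (ℤ-span of an ℝ-basis) iff there are
nonzero integers `n₀, n₁, n₂` with `n₀•u₀ + n₁•u₁ + n₂•u₂ = 0`. -/
theorem stmt_0 (V : Type*) [AddCommGroup V] [Module ℝ V]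
    (hdim : Module.finrank ℝ V = 2) (u₀ u₁ u₂ : V)
    (h01 : LinearIndependent ℝ ![u₀, u₁])
    (h02 : LinearIndependent ℝ ![u₀, u₂])
    (h12 : LinearIndependent ℝ ![u₁, u₂]) :
    (∃ b : Module.Basis (Fin 2) ℝ V,
        u₀ ∈ Submodule.span ℤ (Set.range b) ∧
        u₁ ∈ Submodule.span ℤ (Set.range b) ∧
        u₂ ∈ Submodule.span ℤ (Set.range b)) ↔
    (∃ n₀ n₁ n₂ : ℤ, n₀ ≠ 0 ∧ n₁ ≠ 0 ∧ n₂ ≠ 0 ∧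
        n₀ • u₀ + n₁ • u₁ + n₂ • u₂ = 0) := by
  constructor
  · rintro ⟨b, hb0, hb1, hb2⟩
    rw [Submodule.mem_span_range_iff_exists_fun] at hb0 hb1 hb2
    obtain ⟨c0, hc0⟩ := hb0
    obtain ⟨c1, hc1⟩ := hb1
    obtain ⟨c2, hc2⟩ := hb2
    simp only [Fin.sum_univ_two] at hc0 hc1 hc2
    -- rewrite ℤ-smul as ℝ-smul
    have key : ∀ (c : Fin 2 → ℤ) (v : V), c 0 • b 0 + c 1 • b 1 = v →
        ((c 0 : ℝ)) • b 0 + ((c 1 : ℝ)) • b 1 = v := by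
      intro c v h
      rw [Int.cast_smul_eq_zsmul, Int.cast_smul_eq_zsmul]; exact h
    have hc0' := key c0 u₀ hc0
    have hc1' := key c1 u₁ hc1
    have hc2' := key c2 u₂ hc2
    set d : ℤ := c0 0 * c1 1 - c0 1 * c1 0 with hd
    have hpair := LinearIndependent.pair_iff.mp h01
    have hdne : d ≠ 0 := by
      intro h0
      have hdr : (c0 0 : ℝ) * c1 1 - c0 1 * c1 0 = 0 := by
        exact_mod_cast congrArg (fun n : ℤ => (n : ℝ)) h0
      have e1 : (c1 1 : ℝ) • u₀ + (-(c0 1 : ℝ)) • u₁ = 0 := by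
        rw [← hc0', ← hc1']
        simp only [smul_add, smul_smul]
        rw [show (c1 1 : ℝ) * c0 0 = c0 1 * c1 0 by linarith [hdr]]
        module
      have e2 : (-(c1 0 : ℝ)) • u₀ + (c0 0 : ℝ) • u₁ = 0 := by
        rw [← hc0', ← hc1']
        simp only [smul_add, smul_smul]
        rw [show (c0 0 : ℝ) * c1 0 = c1 0 * c0 0 by ring,
            show (c0 0 : ℝ) * c1 1 = c0 1 * c1 0 by linarith [hdr]]
        module
      obtain ⟨ha, hb'⟩ := hpair _ _ e1
      obtain ⟨hc, hd'⟩ := hpair _ _ e2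
      have : u₀ = 0 := by
        rw [← hc0', hd', neg_eq_zero.mp hb']; simp
      exact (h01.ne_zero 0) (by simpa using this)
    set p : ℤ := c2 0 * c1 1 - c2 1 * c1 0 with hp
    set q : ℤ := c0 0 * c2 1 - c0 1 * c2 0 with hq
    have main : (p : ℝ) • u₀ + (q : ℝ) • u₁ + (-(d : ℝ)) • u₂ = 0 := by
      rw [← hc0', ← hc1', ← hc2']
      simp only [smul_add, smul_smul, hp, hq, hd]
      push_cast
      module
    have hdr : (d : ℝ) ≠ 0 := Int.cast_ne_zero.mpr hdne
    have hpne : p ≠ 0 := by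
      intro h0
      have e : (q : ℝ) • u₁ + (-(d : ℝ)) • u₂ = 0 := by
        rw [h0] at main; push_cast at main ⊢; linear_combination (norm := module) main
      obtain ⟨h1, h2⟩ := (LinearIndependent.pair_iff.mp h12) _ _ e
      exact hdr (by linarith [neg_eq_zero.mp h2])
    have hqne : q ≠ 0 := by
      intro h0
      have e : (p : ℝ) • u₀ + (-(d : ℝ)) • u₂ = 0 := by
        rw [h0] at main; push_cast at main ⊢; linear_combination (norm := module) main
      obtain ⟨h1, h2⟩ := (LinearIndependent.pair_iff.mp h02) _ _ e
      exact hdr (by linarith [neg_eq_zero.mp h2])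
    refine ⟨p, q, -d, hpne, hqne, neg_ne_zero.mpr hdne, ?_⟩
    have : ((p : ℝ)) • u₀ + ((q : ℝ)) • u₁ + ((-d : ℤ) : ℝ) • u₂ = 0 := by
      push_cast; convert main using 3
    rw [Int.cast_smul_eq_zsmul, Int.cast_smul_eq_zsmul, Int.cast_smul_eq_zsmul] at this
    exact this
  · rintro ⟨n₀, n₁, n₂, h₀, h₁, h₂, heq⟩
    have hcard : Fintype.card (Fin 2) = Module.finrank ℝ V := by simp [hdim]
    let b' : Module.Basis (Fin 2) ℝ V := basisOfLinearIndependentOfCardEqFinrank h01 hcard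
    have hb' : ∀ i, b' i = ![u₀, u₁] i := fun i => by
      rw [show b' = basisOfLinearIndependentOfCardEqFinrank h01 hcard from rfl,
        coe_basisOfLinearIndependentOfCardEqFinrank]
    have hn2r : ((n₂ : ℝ)) ≠ 0 := Int.cast_ne_zero.mpr h₂
    let w : Fin 2 → ℝˣ := fun _ => Units.mk0 ((n₂ : ℝ)⁻¹) (inv_ne_zero hn2r)
    let b : Module.Basis (Fin 2) ℝ V := b'.unitsSMul w
    have hb : ∀ i, b i = (n₂ : ℝ)⁻¹ • ![u₀, u₁] i := fun i => by
      rw [show b i = w i • b' i from Module.Basis.unitsSMul_apply i, hb' i]; rfl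
    refine ⟨b, ?_, ?_, ?_⟩
    · have : u₀ = n₂ • b 0 := by
        rw [hb 0, ← Int.cast_smul_eq_zsmul ℝ, smul_smul,
          mul_inv_cancel₀ hn2r, one_smul]
        rfl
      rw [this]
      exact Submodule.smul_mem _ _ (Submodule.subset_span ⟨0, rfl⟩)
    · have : u₁ = n₂ • b 1 := by
        rw [hb 1, ← Int.cast_smul_eq_zsmul ℝ, smul_smul,
          mul_inv_cancel₀ hn2r, one_smul]
        rfl
      rw [this]
      exact Submodule.smul_mem _ _ (Submodule.subset_span ⟨1, rfl⟩)
    · have heqr : (n₀ : ℝ) • u₀ + (n₁ : ℝ) • u₁ + (n₂ : ℝ) • u₂ = 0 := by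
        rw [Int.cast_smul_eq_zsmul, Int.cast_smul_eq_zsmul, Int.cast_smul_eq_zsmul]
        exact heq
      have : u₂ = (-n₀) • b 0 + (-n₁) • b 1 := by
        rw [hb 0, hb 1, ← Int.cast_smul_eq_zsmul ℝ (-n₀), ← Int.cast_smul_eq_zsmul ℝ (-n₁)]
        push_cast
        show u₂ = (-(n₀:ℝ)) • ((n₂:ℝ)⁻¹ • u₀) + (-(n₁:ℝ)) • ((n₂:ℝ)⁻¹ • u₁)
        have := congrArg (fun v => (n₂ : ℝ)⁻¹ • v) heqr
        simp only [smul_add, smul_smul, smul_zero] at this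
        field_simp at this ⊢
        linear_combination (norm := module) this
      rw [this]
      exact Submodule.add_mem _
        (Submodule.smul_mem _ _ (Submodule.subset_span ⟨0, rfl⟩))
        (Submodule.smul_mem _ _ (Submodule.subset_span ⟨1, rfl⟩))
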